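/- Let (X,d) be a metric space and let f : X → ℝ ∪ {+∞} satisfy Assumption A1 for some λ ∈ ℝ. Then for every x in the effective domain D(f), the descending slope admits the global representation |∂f|(x) = sup_{y ≠ x} max( −( f(y) − f(x) − (λ/2) d(y,x)² ), 0 ) / d(y,x). -/

import Mathlib

open Filter Topology MeasureTheory
open scoped ENNReal NNReal Classical

section Defs

variable {X : Type*} [MetricSpace X]

/-- The descending slope `|∂f|(x)` of `f : X → ℝ ∪ {+∞}`.  It is `+∞` outside of the effective
domain, and otherwise `limsup_{y → x} (f x - f y)⁺ / d(y,x)` (which is `0` at isolated points,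
since then the limsup is taken along the bottom filter). -/
noncomputable def descSlope (f : X → EReal) (x : X) : ℝ≥0∞ :=
  if f x = ⊤ then ⊤
  else Filter.limsup (fun y => ENNReal.ofReal (((f x - f y) ⊔ 0).toReal / dist y x)) (𝓝[≠] x)

/-- The (upper) metric speed of a curve at a point: where the metric derivative
`lim_{s → t} d(γ s, γ t)/|s - t|` exists, it coincides with this limsup. -/
noncomputable def mSpeed (γ : ℝ → X) (t : ℝ) : ℝ≥0∞ :=
  Filter.limsup (fun s => ENNReal.ofReal (dist (γ s) (γ t) / |s - t|)) (𝓝[≠] t)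

/-- A curve is absolutely continuous on `[a,b]` if its increments are controlled by the
integral of some nonnegative integrable function. -/
def IsACCurveOn (γ : ℝ → X) (a b : ℝ) : Prop :=
  ∃ g : ℝ → ℝ, MeasureTheory.IntegrableOn g (Set.Icc a b) ∧ (∀ t, 0 ≤ g t) ∧
    ∀ s t : ℝ, a ≤ s → s ≤ t → t ≤ b → dist (γ s) (γ t) ≤ ∫ r in s..t, g r

/-- The action integral `∫₀¹ |γ̇|²(t) + |∂f|²(γ(t)) dt`. -/
noncomputable def actionIntegral (f : X → EReal) (γ : ℝ → X) : ℝ≥0∞ :=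
  ∫⁻ t in Set.Ioo (0:ℝ) 1, ((mSpeed γ t) ^ 2 + (descSlope f (γ t)) ^ 2)

/-- The action functional `Θ^f_{x₀,x₁}`. -/
noncomputable def Theta (f : X → EReal) (x₀ x₁ : X) (γ : ℝ → X) : ℝ≥0∞ :=
  if IsACCurveOn γ 0 1 ∧ γ 0 = x₀ ∧ γ 1 = x₁ then actionIntegral f γ else ⊤

/-- `γ : [0,1] → X` is a constant speed geodesic. -/
def IsGeodesic (γ : ℝ → X) : Prop :=
  ∀ s ∈ Set.Icc (0:ℝ) 1, ∀ t ∈ Set.Icc (0:ℝ) 1,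
    dist (γ s) (γ t) = |s - t| * dist (γ 0) (γ 1)

/-- Every pair of points is joined by a constant speed geodesic. -/
def GeodesicSp (X : Type*) [MetricSpace X] : Prop :=
  ∀ x y : X, ∃ γ : ℝ → X, IsGeodesic γ ∧ γ 0 = x ∧ γ 1 = y

/-- `X` is a CAT(0) space. -/
def IsCAT0 (X : Type*) [MetricSpace X] : Prop :=
  GeodesicSp X ∧ ∀ (y : X) (γ : ℝ → X), IsGeodesic γ → ∀ t ∈ Set.Icc (0:ℝ) 1,
    dist y (γ t) ^ 2 ≤ (1 - t) * dist y (γ 0) ^ 2 + t * dist y (γ 1) ^ 2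
      - t * (1 - t) * dist (γ 0) (γ 1) ^ 2

/-- `f` is `λ`-convex along every constant speed geodesic. -/
def LambdaConvex (f : X → EReal) (lam : ℝ) : Prop :=
  ∀ γ : ℝ → X, IsGeodesic γ → ∀ t ∈ Set.Icc (0:ℝ) 1,
    f (γ t) ≤ ((1 - t : ℝ) : EReal) * f (γ 0) + ((t : ℝ) : EReal) * f (γ 1)
      - ((lam / 2 * t * (1 - t) * dist (γ 0) (γ 1) ^ 2 : ℝ) : EReal)

/-- The resolvent `J_τ^f x`: the set of minimizers of `y ↦ f y + d(y,x)²/(2τ)`. -/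
def resolvSet (f : X → EReal) (τ : ℝ) (x : X) : Set X :=
  {u | ∀ y : X, f u + ((dist u x ^ 2 / (2 * τ) : ℝ) : EReal)
      ≤ f y + ((dist y x ^ 2 / (2 * τ) : ℝ) : EReal)}

def IsBoundedSeq (u : ℕ → X) : Prop := ∃ R : ℝ, ∀ n, dist (u n) (u 0) ≤ R

/-- `x` is the asymptotic centre of the (bounded) sequence `u`, i.e. the unique minimizer of
`y ↦ limsup_n d(y, u n)²`. -/
def IsAsympCentre (u : ℕ → X) (x : X) : Prop :=
  ∀ y : X, y ≠ x →
    Filter.limsup (fun n => dist x (u n) ^ 2) Filter.atTop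
      < Filter.limsup (fun n => dist y (u n) ^ 2) Filter.atTop

/-- Weak convergence: `u` is bounded and `x` is the asymptotic centre of every subsequence. -/
def WeakConv (u : ℕ → X) (x : X) : Prop :=
  IsBoundedSeq u ∧ ∀ φ : ℕ → ℕ, StrictMono φ → IsAsympCentre (u ∘ φ) x

/-- Mosco convergence of `F h` to `f`. -/
def MoscoConv (F : ℕ → X → EReal) (f : X → EReal) : Prop :=
  (∀ (u : ℕ → X) (x : X), WeakConv u x →
      f x ≤ Filter.liminf (fun h => F h (u h)) Filter.atTop) ∧
  (∀ x : X, ∃ u : ℕ → X, Filter.Tendsto u Filter.atTop (𝓝 x) ∧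
      Filter.limsup (fun h => F h (u h)) Filter.atTop ≤ f x)

/-- (Metric) Γ-convergence of `F h` to `f`. -/
def GammaConvSeq (F : ℕ → X → EReal) (f : X → EReal) : Prop :=
  (∀ (u : ℕ → X) (x : X), Filter.Tendsto u Filter.atTop (𝓝 x) →
      f x ≤ Filter.liminf (fun h => F h (u h)) Filter.atTop) ∧
  (∀ x : X, ∃ u : ℕ → X, Filter.Tendsto u Filter.atTop (𝓝 x) ∧
      Filter.limsup (fun h => F h (u h)) Filter.atTop ≤ f x)

/-- Assumption 2.4.5 of Ambrosio-Gigli-Savaré: convexity of the Moreau-Yosida perturbations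
along some curve, with base point `x₀`. -/
def AssumptionA1 (f : X → EReal) (lam : ℝ) : Prop :=
  ∀ x₀ x₁ : X, f x₀ ≠ ⊤ → f x₁ ≠ ⊤ →
    ∃ γ : ℝ → X, γ 0 = x₀ ∧ γ 1 = x₁ ∧
      ∀ τ : ℝ, 0 < τ → τ * max (-lam) 0 < 1 →
        ∀ t ∈ Set.Icc (0:ℝ) 1,
          f (γ t) ≤ (((1 - t) * (f x₀).toReal
            + t * ((f x₁).toReal + dist x₁ x₀ ^ 2 / (2 * τ))
            - (1 / 2) * (lam + 1 / τ) * t * (1 - t) * dist x₀ x₁ ^ 2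
            - dist (γ t) x₀ ^ 2 / (2 * τ) : ℝ) : EReal)

/-- Assumption 4.0.1 of Ambrosio-Gigli-Savaré: convexity of the Moreau-Yosida perturbations
along some curve, for every base point `y`. -/
def AssumptionA2 (f : X → EReal) (lam : ℝ) : Prop :=
  ∀ y x₀ x₁ : X, f y ≠ ⊤ → f x₀ ≠ ⊤ → f x₁ ≠ ⊤ →
    ∃ γ : ℝ → X, γ 0 = x₀ ∧ γ 1 = x₁ ∧
      ∀ τ : ℝ, 0 < τ → τ * max (-lam) 0 < 1 →
        ∀ t ∈ Set.Icc (0:ℝ) 1,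
          f (γ t) ≤ (((1 - t) * ((f x₀).toReal + dist x₀ y ^ 2 / (2 * τ))
            + t * ((f x₁).toReal + dist x₁ y ^ 2 / (2 * τ))
            - (1 / 2) * (lam + 1 / τ) * t * (1 - t) * dist x₀ x₁ ^ 2
            - dist (γ t) y ^ 2 / (2 * τ) : ℝ) : EReal)

/-- `G` is an `EVI_λ` gradient flow trajectory for `f` starting at `x`. -/
def IsEVIFlow (f : X → EReal) (lam : ℝ) (x : X) (G : ℝ → X) : Prop :=
  G 0 = x ∧ Filter.Tendsto G (𝓝[>] (0:ℝ)) (𝓝 x) ∧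
  (∀ t : ℝ, 0 < t → f (G t) ≠ ⊤) ∧
  (∀ a b : ℝ, 0 < a → a ≤ b → IsACCurveOn G a b) ∧
  ∀ v : X, f v ≠ ⊤ →
    ∀ᵐ t ∂(MeasureTheory.volume.restrict (Set.Ioi (0:ℝ))),
      ∃ L : ℝ, HasDerivAt (fun s => dist (G s) v ^ 2) L t ∧
        f (G t) + ((L / 2 + lam / 2 * dist (G t) v ^ 2 : ℝ) : EReal) ≤ f v

/-- Γ-convergence of the functionals `Th h` to `T` on `C([0,1], X)` with respect to uniform
convergence on `[0,1]`. -/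
def ThetaGammaConv (Th : ℕ → (ℝ → X) → ℝ≥0∞) (T : (ℝ → X) → ℝ≥0∞) : Prop :=
  (∀ γ : ℝ → X, ContinuousOn γ (Set.Icc 0 1) →
    ∀ Γ : ℕ → ℝ → X, (∀ h, ContinuousOn (Γ h) (Set.Icc 0 1)) →
      TendstoUniformlyOn (fun h t => Γ h t) γ Filter.atTop (Set.Icc 0 1) →
      T γ ≤ Filter.liminf (fun h => Th h (Γ h)) Filter.atTop) ∧
  (∀ γ : ℝ → X, ContinuousOn γ (Set.Icc 0 1) →
    ∃ Γ : ℕ → ℝ → X, (∀ h, ContinuousOn (Γ h) (Set.Icc 0 1)) ∧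
      TendstoUniformlyOn (fun h t => Γ h t) γ Filter.atTop (Set.Icc 0 1) ∧
      Filter.limsup (fun h => Th h (Γ h)) Filter.atTop ≤ T γ)

end Defs

private lemma ereal_sup_toReal (r : ℝ) : ((r:EReal) ⊔ 0).toReal = max r 0 := by
  rcases le_total r 0 with h|h
  · simp [sup_eq_right.mpr (EReal.coe_nonpos.mpr h), max_eq_right h]
  · rw [sup_eq_left.mpr (by exact_mod_cast h), max_eq_left h, EReal.toReal_coe]

private lemma stepA (Fx N d E t lam : ℝ) (ht : 0 ≤ t) (hE : 0 ≤ E) (hd : 0 ≤ d)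
    (hG : ∀ τ : ℝ, 0 < τ → τ * max (-lam) 0 < 1 →
      t*N + lam/2*t*(1-t)*d^2 + (E^2 - t^2*d^2)/(2*τ) ≤ Fx) :
    E ≤ t * d := by
  by_contra h
  push_neg at h
  have hm0 : (0:ℝ) ≤ max (-lam) 0 := le_max_right _ _
  set m := max (-lam) 0 with hm
  clear_value m
  have hq : 0 < E^2 - t^2*d^2 := by nlinarith [mul_nonneg ht hd]
  set c := E^2 - t^2*d^2 with hc
  set M := Fx - (t*N + lam/2*t*(1-t)*d^2) with hM
  have hMpos : 0 < |M| + 1 := by positivity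
  set τ := min (1/(2*(m+1))) (c/(2*(|M|+1))) with hτdef
  have hτpos : 0 < τ := lt_min (by positivity) (by positivity)
  have h1 : τ ≤ 1/(2*(m+1)) := min_le_left _ _
  have h2 : τ ≤ c/(2*(|M|+1)) := min_le_right _ _
  clear_value c M τ
  have hτm : τ * m < 1 := by
    have h2' := mul_le_mul_of_nonneg_right h1 hm0
    have h3 : 1/(2*(m+1)) * m < 1 := by
      rw [div_mul_eq_mul_div, div_lt_one (by positivity)]
      nlinarith
    linarith
  have hbound := hG τ hτpos hτm
  have h3 : |M| + 1 ≤ c/(2*τ) := by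
    rw [le_div_iff₀ (by positivity)]
    calc (|M|+1)*(2*τ) ≤ (|M|+1)*(2*(c/(2*(|M|+1)))) := by nlinarith
    _ = c := by field_simp
  have ha := le_abs_self M
  have hcM : c/(2*τ) ≤ M := by rw [hM]; linarith
  linarith

private lemma stepB (Fx N d E t lam : ℝ) (hE : 0 ≤ E) (hd : 0 ≤ d) (hEt : E ≤ t * d)
    (ht0 : 0 ≤ t)
    (hG : ∀ τ : ℝ, 0 < τ → τ * max (-lam) 0 < 1 →
      t*N + lam/2*t*(1-t)*d^2 + (E^2 - t^2*d^2)/(2*τ) ≤ Fx) :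
    t*(N + lam/2*d^2) - (max lam 0/2*d^2)*t^2 ≤ Fx := by
  have hq0 : 0 ≤ t^2*d^2 - E^2 := by nlinarith [mul_nonneg ht0 hd]
  apply le_of_forall_pos_le_add
  intro ε hε
  rcases le_or_gt 0 lam with hlam|hlam
  · have hm : max (-lam) 0 = 0 := max_eq_right (neg_nonpos.mpr hlam)
    have hM : max lam 0 = lam := max_eq_left hlam
    set q := t^2*d^2 - E^2 with hqdef
    set τ := max 1 (q/(2*ε)) with hτdef
    have hτpos : (0:ℝ) < τ := lt_of_lt_of_le one_pos (le_max_left _ _)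
    have hb := hG τ hτpos (by rw [hm, mul_zero]; exact one_pos)
    have hq2τ : q/(2*τ) ≤ ε := by
      rw [div_le_iff₀ (by positivity)]
      have h1 : q/(2*ε) ≤ τ := le_max_right _ _
      rw [div_le_iff₀ (by positivity)] at h1
      linarith
    have hE2 : E^2 - t^2*d^2 = -q := by rw [hqdef]; ring
    rw [hE2] at hb
    rw [hM]
    have : -q/(2*τ) = -(q/(2*τ)) := by ring
    rw [this] at hb
    nlinarith
  · have hM : max lam 0 = 0 := max_eq_right hlam.le
    have hm : max (-lam) 0 = -lam := max_eq_left (by linarith)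
    rw [hM]
    rcases eq_or_lt_of_le hq0 with hq|hq
    · set τ := 1/(2*(-lam)) with hτdef
      have hτpos : (0:ℝ) < τ := by rw [hτdef]; exact one_div_pos.mpr (by linarith)
      have hτm : τ * max (-lam) 0 < 1 := by
        rw [hm, hτdef]
        rw [div_mul_eq_mul_div, div_lt_one (by linarith)]
        linarith
      have hb := hG τ hτpos hτm
      have hE2 : E^2 - t^2*d^2 = 0 := by linarith
      rw [hE2, zero_div] at hb
      nlinarith
    · set q := t^2*d^2 - E^2 with hqdef
      have hq' : 0 < q := hq
      have hl : (0:ℝ) < -lam := neg_pos.mpr hlam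
      set τ := 1/((-lam) + 2*ε/q) with hτdef
      have hden : (0:ℝ) < (-lam) + 2*ε/q := add_pos hl (by positivity)
      have hτpos : (0:ℝ) < τ := one_div_pos.mpr hden
      have hτm : τ * max (-lam) 0 < 1 := by
        rw [hm, hτdef, div_mul_eq_mul_div, div_lt_one hden, one_mul]
        have : 0 < 2*ε/q := by positivity
        linarith
      have hb := hG τ hτpos hτm
      have hE2 : E^2 - t^2*d^2 = -q := by rw [hqdef]; ring
      rw [hE2] at hb
      have hqτ : -q/(2*τ) = -((-lam)*q/2 + ε) := by
        rw [hτdef]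
        field_simp
      rw [hqτ] at hb
      have hEsq : lam/2 * E^2 ≤ 0 := by nlinarith [sq_nonneg E]
      nlinarith


set_option maxHeartbeats 2000000 in
/-- Global representation of the descending slope under Assumption A1. -/
theorem statement0 {X : Type*} [MetricSpace X] (f : X → EReal) (lam : ℝ)
    (hbot : ∀ x, f x ≠ ⊥) (hA1 : AssumptionA1 f lam)
    (x : X) (hx : f x ≠ ⊤) :
    descSlope f x = ⨆ y ∈ {y : X | y ≠ x},
      ENNReal.ofReal
        (((f x + ((lam / 2 * dist y x ^ 2 : ℝ) : EReal) - f y) ⊔ 0).toReal / dist y x) := by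
  have hxb := hbot x
  set Fx := (f x).toReal with hFxdef
  have hfx : f x = (Fx : EReal) := (EReal.coe_toReal hx hxb).symm
  set g : X → ℝ≥0∞ := fun y => ENNReal.ofReal (((f x - f y) ⊔ 0).toReal / dist y x) with hg
  have hslope : descSlope f x = Filter.limsup g (𝓝[≠] x) := if_neg hx
  clear_value g
  set S := ⨆ y ∈ {y : X | y ≠ x},
      ENNReal.ofReal
        (((f x + ((lam / 2 * dist y x ^ 2 : ℝ) : EReal) - f y) ⊔ 0).toReal / dist y x) with hSdef
  -- term rewriting for y with f y ≠ ⊤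
  have hterm : ∀ y : X, f y ≠ ⊤ →
      (((f x + ((lam / 2 * dist y x ^ 2 : ℝ) : EReal) - f y) ⊔ 0).toReal
        = max (Fx + lam/2 * dist y x ^ 2 - (f y).toReal) 0) := by
    intro y hfy
    have hfy' : f y = ((f y).toReal : EReal) := (EReal.coe_toReal hfy (hbot y)).symm
    rw [hfx, hfy', ← EReal.coe_add, ← EReal.coe_sub, ereal_sup_toReal]
    simp
  have htermtop : ∀ y : X, f y = ⊤ →
      (((f x + ((lam / 2 * dist y x ^ 2 : ℝ) : EReal) - f y) ⊔ 0).toReal = 0) := by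
    intro y hfy
    rw [hfx, hfy, ← EReal.coe_add]
    simp
  refine le_antisymm ?_ ?_
  · -- descSlope ≤ S
    rcases eq_or_ne S ⊤ with hS|hS
    · rw [hS]; exact le_top
    rw [hslope]
    set c := max (-lam) 0 / 2 with hcdef
    have hc0 : 0 ≤ c := by positivity
    have hpt : ∀ y : X, y ≠ x → ((f x - f y) ⊔ 0).toReal / dist y x
        ≤ S.toReal + c * dist y x := by
      intro y hy
      have hd : 0 < dist y x := dist_pos.mpr (by simpa using hy)
      have hSnn : 0 ≤ S.toReal := ENNReal.toReal_nonneg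
      rcases eq_or_ne (f y) ⊤ with hfy|hfy
      · rw [hfx, hfy]
        simp only [EReal.sub_top]
        have : ((⊥ : EReal) ⊔ 0).toReal = 0 := by simp
        rw [this, zero_div]
        have h1 : (0:ℝ) ≤ c * dist y x := mul_nonneg hc0 dist_nonneg
        have h2 : (0:ℝ) ≤ S.toReal := ENNReal.toReal_nonneg
        linarith
      · have hfy' : f y = ((f y).toReal : EReal) := (EReal.coe_toReal hfy (hbot y)).symm
        set Fy := (f y).toReal with hFydef
        have hle1 : ENNReal.ofReal
            (((f x + ((lam / 2 * dist y x ^ 2 : ℝ) : EReal) - f y) ⊔ 0).toReal / dist y x) ≤ S := by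
          rw [hSdef]
          exact le_iSup₂ (f := fun y (_ : y ∈ {y : X | y ≠ x}) => ENNReal.ofReal
            (((f x + ((lam / 2 * dist y x ^ 2 : ℝ) : EReal) - f y) ⊔ 0).toReal / dist y x)) y hy
        rw [hterm y hfy] at hle1
        have hnn : 0 ≤ max (Fx + lam/2 * dist y x ^ 2 - Fy) 0 / dist y x := by positivity
        have hle2 : max (Fx + lam/2 * dist y x ^ 2 - Fy) 0 / dist y x ≤ S.toReal := by
          have := ENNReal.toReal_mono hS hle1
          rwa [ENNReal.toReal_ofReal hnn] at this
        rw [hfx, hfy', ← EReal.coe_sub, ereal_sup_toReal]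
        -- max (Fx - Fy) 0 ≤ max (Fx + lam/2 d² - Fy) 0 + c*d²
        have hkey : max (Fx - Fy) 0 ≤ max (Fx + lam/2 * dist y x ^ 2 - Fy) 0
            + c * dist y x ^ 2 := by
          rcases le_or_gt 0 lam with hl|hl
          · have hc' : c = max (-lam) 0 / 2 := hcdef
            have h1 : Fx - Fy ≤ Fx + lam/2 * dist y x ^2 - Fy := by nlinarith [sq_nonneg (dist y x)]
            have h2 : (0:ℝ) ≤ c * dist y x ^2 := mul_nonneg hc0 (sq_nonneg _)
            rcases le_total (Fx - Fy) 0 with h|h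
            · rw [max_eq_right h]
              have := le_max_right (Fx + lam/2*dist y x^2 - Fy) 0
              linarith
            · rw [max_eq_left h]
              calc Fx - Fy ≤ Fx + lam/2*dist y x^2 - Fy := h1
              _ ≤ max (Fx + lam/2*dist y x^2 - Fy) 0 := le_max_left _ _
              _ ≤ _ := by linarith
          · have hcl : c = -lam/2 := by rw [hcdef, max_eq_left (by linarith)]
            rcases le_total (Fx - Fy) 0 with h|h
            · rw [max_eq_right h]
              have : (0:ℝ) ≤ c * dist y x ^2 := by
                rw [hcl]; nlinarith [sq_nonneg (dist y x)]
              have := le_max_right (Fx + lam/2*dist y x^2 - Fy) 0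
              linarith
            · rw [max_eq_left h, hcl]
              have := le_max_left (Fx + lam/2*dist y x^2 - Fy) 0
              nlinarith [sq_nonneg (dist y x)]
        calc max (Fx - Fy) 0 / dist y x
            ≤ (max (Fx + lam/2 * dist y x ^ 2 - Fy) 0 + c * dist y x ^ 2) / dist y x := by
              gcongr
          _ = max (Fx + lam/2 * dist y x ^ 2 - Fy) 0 / dist y x + c * dist y x := by
              field_simp
          _ ≤ S.toReal + c * dist y x := by linarith
    -- now the limsup bound
    apply ENNReal.le_of_forall_pos_le_add
    intro ε hε _
    have hεR : (0:ℝ) < (ε:ℝ) := by exact_mod_cast hε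
    set δ := (ε : ℝ)/(c+1) with hδdef
    have hc1 : (0:ℝ) < c + 1 := by linarith
    have hδpos : 0 < δ := div_pos hεR hc1
    have h1 : ∀ᶠ y in 𝓝[≠] x, dist y x < δ := by
      apply Filter.Eventually.filter_mono nhdsWithin_le_nhds
      filter_upwards [Metric.ball_mem_nhds x hδpos] with y hy
      simpa [Metric.mem_ball] using hy
    have hcδ : c * δ ≤ (ε:ℝ) := by
      rw [hδdef, mul_div_assoc', div_le_iff₀ hc1]
      nlinarith
    have hev : ∀ᶠ y in 𝓝[≠] x, g y ≤ S + ε := by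
      filter_upwards [h1, self_mem_nhdsWithin] with y h1y h2y
      have hyx : y ≠ x := h2y
      have hgy : g y = ENNReal.ofReal (((f x - f y) ⊔ 0).toReal / dist y x) := by rw [hg]
      rw [hgy]
      calc ENNReal.ofReal (((f x - f y) ⊔ 0).toReal / dist y x) ≤ ENNReal.ofReal (S.toReal + c * dist y x) :=
            ENNReal.ofReal_le_ofReal (hpt y hyx)
        _ ≤ ENNReal.ofReal (S.toReal + c * δ) := by
            apply ENNReal.ofReal_le_ofReal
            have := mul_le_mul_of_nonneg_left h1y.le hc0
            linarith
        _ ≤ ENNReal.ofReal S.toReal + ENNReal.ofReal (c * δ) := ENNReal.ofReal_add_le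
        _ = S + ENNReal.ofReal (c * δ) := by rw [ENNReal.ofReal_toReal hS]
        _ ≤ S + ε := by
            apply add_le_add le_rfl
            exact ENNReal.ofReal_le_of_le_toReal (by simpa using hcδ)
    exact limsup_le_of_le (by isBoundedDefault) hev
  · -- S ≤ descSlope
    rw [hSdef, hslope]
    apply iSup₂_le
    intro y hy
    have hyx : y ≠ x := hy
    have hd : 0 < dist y x := dist_pos.mpr hyx
    rcases eq_or_ne (f y) ⊤ with hfy|hfy
    · rw [htermtop y hfy, zero_div, ENNReal.ofReal_zero]
      exact zero_le
    rw [hterm y hfy]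
    have hfy' : f y = ((f y).toReal : EReal) := (EReal.coe_toReal hfy (hbot y)).symm
    set Fy := (f y).toReal with hFydef
    set d := dist y x with hddef
    set A := Fx + lam/2*d^2 - Fy with hAdef
    clear_value Fy d A
    rcases le_or_gt A 0 with hA|hA
    · rw [max_eq_right hA, zero_div, ENNReal.ofReal_zero]
      exact zero_le
    rw [max_eq_left hA.le]
    obtain ⟨γ, hγ0, hγ1, hkey⟩ := hA1 x y hx hfy
    have hm0 : (0:ℝ) ≤ max (-lam) 0 := le_max_right _ _
    have hτ0pos : (0:ℝ) < 1/(2*(max (-lam) 0 + 1)) := by positivity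
    have hτ0m : (1/(2*(max (-lam) 0 + 1))) * max (-lam) 0 < 1 := by
      rw [div_mul_eq_mul_div, div_lt_one (by positivity)]
      nlinarith
    have hfγtop : ∀ t ∈ Set.Icc (0:ℝ) 1, f (γ t) ≠ ⊤ := fun t ht =>
      ((hkey _ hτ0pos hτ0m t ht).trans_lt (EReal.coe_lt_top _)).ne
    have hG : ∀ t ∈ Set.Icc (0:ℝ) 1, ∀ τ : ℝ, 0 < τ → τ * max (-lam) 0 < 1 →
        t*(Fx - Fy) + lam/2*t*(1-t)*d^2 + ((dist (γ t) x)^2 - t^2*d^2)/(2*τ)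
          ≤ Fx - (f (γ t)).toReal := by
      intro t ht τ hτ hτm
      have h1 := hkey τ hτ hτm t ht
      have h2 := EReal.toReal_le_toReal h1 (hbot _) (EReal.coe_ne_top _)
      rw [EReal.toReal_coe, dist_comm x y, ← hddef, ← hFxdef, ← hFydef] at h2
      have hτ' : τ ≠ 0 := hτ.ne'
      have heq : (1-t)*Fx + t*(Fy + d^2/(2*τ)) - (1/2)*(lam+1/τ)*t*(1-t)*d^2
            - dist (γ t) x^2/(2*τ)
          = Fx - (t*(Fx-Fy) + lam/2*t*(1-t)*d^2 + ((dist (γ t) x)^2 - t^2*d^2)/(2*τ)) := by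
        field_simp
        ring
      rw [heq] at h2
      linarith
    have hEA : ∀ t ∈ Set.Icc (0:ℝ) 1, dist (γ t) x ≤ t * d := fun t ht =>
      stepA (Fx - (f (γ t)).toReal) (Fx - Fy) d (dist (γ t) x) t lam ht.1
        dist_nonneg hd.le (hG t ht)
    set C := max lam 0/2*d^2 with hCdef
    clear_value C
    have hC0 : (0:ℝ) ≤ C := by
      rw [hCdef]
      have : (0:ℝ) ≤ max lam 0 := le_max_right _ _
      nlinarith [sq_nonneg d]
    have hB : ∀ t ∈ Set.Icc (0:ℝ) 1,
        t*A - C*t^2 ≤ Fx - (f (γ t)).toReal := by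
      intro t ht
      have := stepB (Fx - (f (γ t)).toReal) (Fx - Fy) d (dist (γ t) x) t lam
        dist_nonneg hd.le (hEA t ht) ht.1 (hG t ht)
      have hAeq : (Fx - Fy) + lam/2*d^2 = A := by rw [hAdef]; ring
      rw [hAeq] at this
      rw [hCdef]
      linarith
    set tm := min 1 (A/(C+1)) with htmdef
    have hC1 : (0:ℝ) < C + 1 := by linarith
    have htmpos : 0 < tm := lt_min one_pos (div_pos hA hC1)
    have htm1 : tm ≤ 1 := min_le_left _ _
    have htmA : tm ≤ A/(C+1) := min_le_right _ _
    clear_value tm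
    have hIoo : Set.Ioo (0:ℝ) tm ∈ 𝓝[>] (0:ℝ) :=
      Ioo_mem_nhdsGT_of_mem ⟨le_refl 0, htmpos⟩
    -- pointwise facts for t ∈ Ioo 0 tm
    have hptw : ∀ t ∈ Set.Ioo (0:ℝ) tm, γ t ≠ x ∧
        ENNReal.ofReal ((A - C*t)/d) ≤ g (γ t) := by
      intro t ht
      have hticc : t ∈ Set.Icc (0:ℝ) 1 :=
        ⟨ht.1.le, ht.2.le.trans htm1⟩
      have htlt : t < A/(C+1) := lt_of_lt_of_le ht.2 htmA
      have hACt : 0 < A - C*t := by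
        have h1 : C*t ≤ C*(A/(C+1)) := mul_le_mul_of_nonneg_left htlt.le hC0
        have h2 : C * (A/(C+1)) < A := by
          rw [mul_div_assoc', div_lt_iff₀ hC1]
          nlinarith
        linarith
      have hNt : 0 < Fx - (f (γ t)).toReal := by
        have h1 := hB t hticc
        have h2 := mul_pos ht.1 hACt
        have h3 : t*(A - C*t) = t*A - C*t^2 := by ring
        linarith
      have hne : γ t ≠ x := by
        intro hcon
        rw [hcon, ← hFxdef] at hNt
        linarith
      have hEpos : 0 < dist (γ t) x := dist_pos.mpr hne
      refine ⟨hne, ?_⟩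
      have hcoe : f (γ t) = (((f (γ t)).toReal : ℝ) : EReal) :=
        (EReal.coe_toReal (hfγtop t hticc) (hbot _)).symm
      have hgγ : f x - f (γ t) = ((Fx - (f (γ t)).toReal : ℝ) : EReal) := by
        conv_lhs => rw [hfx, hcoe]
        exact (EReal.coe_sub _ _).symm
      have hgeq : g (γ t) = ENNReal.ofReal ((Fx - (f (γ t)).toReal) / dist (γ t) x) := by
        rw [hg]
        simp only []
        rw [hgγ, ereal_sup_toReal, max_eq_left hNt.le]
      rw [hgeq]
      apply ENNReal.ofReal_le_ofReal
      rw [div_le_div_iff₀ hd hEpos]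
      have h1 := hEA t hticc
      have h2 := hB t hticc
      have e1 : (A - C*t) * dist (γ t) x ≤ (A - C*t) * (t*d) :=
        mul_le_mul_of_nonneg_left h1 hACt.le
      have e2 : (t*A - C*t^2) * d ≤ (Fx - (f (γ t)).toReal) * d :=
        mul_le_mul_of_nonneg_right h2 hd.le
      have e3 : (A - C*t)*(t*d) = (t*A - C*t^2)*d := by ring
      linarith
    have htendnhds : Filter.Tendsto γ (𝓝[>] (0:ℝ)) (𝓝 x) := by
      rw [tendsto_iff_dist_tendsto_zero]
      apply squeeze_zero' (Filter.Eventually.of_forall (fun t => dist_nonneg))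
      · filter_upwards [hIoo] with t ht
        exact hEA t ⟨ht.1.le, ht.2.le.trans htm1⟩
      · have h1 : Filter.Tendsto (fun t : ℝ => t * d) (𝓝 0) (𝓝 (0 * d)) :=
          (continuous_id.mul continuous_const).tendsto 0
        rw [zero_mul] at h1
        exact h1.mono_left nhdsWithin_le_nhds
    have htends : Filter.Tendsto γ (𝓝[>] (0:ℝ)) (𝓝[≠] x) := by
      rw [tendsto_nhdsWithin_iff]
      refine ⟨htendnhds, ?_⟩
      filter_upwards [hIoo] with t ht
      exact (hptw t ht).1
    have h1 : Filter.Tendsto (fun t : ℝ => ENNReal.ofReal ((A - C*t)/d)) (𝓝[>] (0:ℝ))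
        (𝓝 (ENNReal.ofReal (A/d))) := by
      apply ENNReal.tendsto_ofReal
      have h2 : Filter.Tendsto (fun t : ℝ => (A - C*t)/d) (𝓝 0) (𝓝 ((A - C*0)/d)) :=
        ((continuous_const.sub (continuous_const.mul continuous_id)).div_const d).tendsto 0
      rw [mul_zero, sub_zero] at h2
      exact h2.mono_left nhdsWithin_le_nhds
    calc ENNReal.ofReal (A/d)
        = Filter.liminf (fun t : ℝ => ENNReal.ofReal ((A - C*t)/d)) (𝓝[>] (0:ℝ)) :=
          h1.liminf_eq.symm
      _ ≤ Filter.liminf (g ∘ γ) (𝓝[>] (0:ℝ)) := by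
          have hev2 : ∀ᶠ t in 𝓝[>] (0:ℝ),
              ENNReal.ofReal ((A - C*t)/d) ≤ (g ∘ γ) t := by
            filter_upwards [hIoo] with t ht
            exact (hptw t ht).2
          exact liminf_le_liminf hev2 (by isBoundedDefault) (by isBoundedDefault)
      _ ≤ Filter.limsup (g ∘ γ) (𝓝[>] (0:ℝ)) := liminf_le_limsup
      _ = Filter.limsup g (Filter.map γ (𝓝[>] (0:ℝ))) := Filter.limsup_comp g γ _
      _ ≤ Filter.limsup g (𝓝[≠] x) := limsup_le_limsup_of_le htends
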